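/- Let n ≥ 3 and let i be an integer with 1 ≤ i ≤ (n−1)/2. Let ρ^i denote the hook partition (n−i, 1, 1, …, 1) of n with i parts equal to 1. Then for every partition λ of n that is an i-cycle detector and satisfies λ_1 ≥ λ′_1, one has M_3(λ) ≤ M_3(ρ^i). -/

import Mathlib

/-- The `j`-th part (1-indexed) of a partition given as a list of parts in decreasing
order, padded with zeros beyond the end. -/
def part (l : List ℕ) (j : ℕ) : ℕ := l.getD (j - 1) 0

/-- The `j`-th part (1-indexed) of the conjugate partition: `λ′_j = #{m : λ_m ≥ j}`. -/
def conjPart (l : List ℕ) (j : ℕ) : ℕ := (l.filter (fun x => j ≤ x)).length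

/-- `λ` is an `i`-cycle detector if the hooks at cells `(2,1)` and `(1,2)` both have
length at least `i`, i.e. `λ_2 + λ′_1 − 2 ≥ i` and `λ′_2 + λ_1 − 2 ≥ i`. -/
def IsCycleDetector (l : List ℕ) (i : ℕ) : Prop :=
  i + 2 ≤ part l 2 + conjPart l 1 ∧ i + 2 ≤ conjPart l 2 + part l 1

/-- `M_3(λ) = Σ_{j=1}^{r} [(λ_j − j)(λ_j − j + 1)(2λ_j − 2j + 1) + j(j − 1)(2j − 1)]`. -/
def M3 (l : List ℕ) : ℤ :=
  ∑ j ∈ Finset.Icc 1 l.length,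
    (((part l j : ℤ) - j) * ((part l j : ℤ) - j + 1) * (2 * (part l j : ℤ) - 2 * j + 1)
      + (j : ℤ) * ((j : ℤ) - 1) * (2 * (j : ℤ) - 1))

/-- The hook partition `ρ^i = (n − i, 1, …, 1)` of `n` with `i` parts equal to `1`. -/
def hookPart (n i : ℕ) : List ℕ := (n - i) :: List.replicate i 1

/- ------------------ auxiliary development ------------------ -/

/-- number of cells of the Young diagram with |content| ≥ k -/
def cnt (l : List ℕ) (k : ℕ) : ℕ :=
  ∑ j ∈ Finset.Icc 1 l.length, ∑ m ∈ Finset.Icc 1 (part l j),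
    if j + k ≤ m ∨ m + k ≤ j then 1 else 0

/-- number of cells of the Young diagram with |content| ≤ k−1 -/
def mcnt (l : List ℕ) (k : ℕ) : ℕ :=
  ∑ j ∈ Finset.Icc 1 l.length, ∑ m ∈ Finset.Icc 1 (part l j),
    if ¬ (j + k ≤ m ∨ m + k ≤ j) then 1 else 0

lemma splitLow (f : ℕ → ℕ) {a J : ℕ} (h : a ≤ J) :
    ∑ j ∈ Finset.Icc a J, f j = f a + ∑ j ∈ Finset.Icc (a+1) J, f j := by
  rw [Finset.Icc_eq_cons_Ioc h, Finset.sum_cons, ← Finset.Icc_add_one_left_eq_Ioc]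

lemma split3 (f : ℕ → ℕ) {J : ℕ} (hJ : 2 ≤ J) :
    ∑ j ∈ Finset.Icc 1 J, f j = f 1 + f 2 + ∑ j ∈ Finset.Icc 3 J, f j := by
  rw [splitLow f (by omega : 1 ≤ J), splitLow f hJ]
  ring

lemma sum_ind_ge (p q : ℕ) :
    (∑ m ∈ Finset.Icc 1 p, if q + 1 ≤ m then 1 else 0) = p - q := by
  induction p with
  | zero => simp
  | succ p ih =>
    rw [Finset.sum_Icc_succ_top (by omega), ih]
    split_ifs <;> omega

lemma sum_ind_le (p q : ℕ) :
    (∑ m ∈ Finset.Icc 1 p, if m ≤ q then 1 else 0) = min p q := by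
  induction p with
  | zero => simp
  | succ p ih =>
    rw [Finset.sum_Icc_succ_top (by omega), ih]
    split_ifs <;> omega

lemma sum_layer (K t : ℕ) :
    (∑ k ∈ Finset.Icc 1 K, (2 * k - 1) * if k ≤ t then 1 else 0) = (min t K) ^ 2 := by
  induction K with
  | zero => simp
  | succ K ih =>
    rw [Finset.sum_Icc_succ_top (by omega), ih]
    split_ifs with h
    · have h1 : min t (K + 1) = K + 1 := by omega
      have h2 : min t K = K := by omega
      have h3 : 2 * (K + 1) - 1 = 2 * K + 1 := by omega
      rw [h1, h2, h3]; ring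
    · have h1 : min t (K + 1) = min t K := by omega
      rw [h1]; omega

lemma rowM3 (p j : ℕ) :
    ((p : ℤ) - j) * ((p : ℤ) - j + 1) * (2 * (p : ℤ) - 2 * j + 1)
      + (j : ℤ) * ((j : ℤ) - 1) * (2 * (j : ℤ) - 1)
      = 6 * ∑ m ∈ Finset.Icc 1 p, ((m : ℤ) - j) ^ 2 := by
  induction p with
  | zero => simp; ring
  | succ p ih =>
    rw [Finset.sum_Icc_succ_top (by omega)]
    push_cast
    push_cast at ih
    linear_combination ih

lemma sq_eq_dist (m j : ℕ) : ((m : ℤ) - j) ^ 2 = ((Nat.dist m j : ℕ) : ℤ) ^ 2 := by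
  rcases le_total m j with h | h
  · have h1 : (m : ℤ) - j = -((Nat.dist m j : ℕ) : ℤ) := by
      simp only [Nat.dist]; push_cast; omega
    rw [h1]; ring
  · have h1 : (m : ℤ) - j = ((Nat.dist m j : ℕ) : ℤ) := by
      simp only [Nat.dist]; push_cast; omega
    rw [h1]

lemma dist_cond (k m j : ℕ) : (k ≤ Nat.dist m j) ↔ (j + k ≤ m ∨ m + k ≤ j) := by
  simp only [Nat.dist]; omega

lemma sum_getD (l : List ℕ) : ∑ j ∈ Finset.range l.length, l.getD j 0 = l.sum := by
  induction l with
  | nil => simp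
  | cons x xs ih =>
    rw [List.length_cons, Finset.sum_range_succ']
    simp only [List.getD_cons_succ, List.getD_cons_zero, List.sum_cons, ih]
    omega

lemma sum_parts (l : List ℕ) : ∑ j ∈ Finset.Icc 1 l.length, part l j = l.sum := by
  rw [← Finset.Ico_add_one_right_eq_Icc, Finset.sum_Ico_eq_sum_range]
  simp only [Nat.add_sub_cancel, part, Nat.add_sub_cancel_left]
  exact (Finset.sum_congr rfl fun i _ => rfl).trans (sum_getD l)

lemma part_mem (l : List ℕ) {j : ℕ} (h1 : 1 ≤ j) (h2 : j ≤ l.length) : part l j ∈ l := by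
  have : j - 1 < l.length := by omega
  rw [part, l.getD_eq_getElem 0 this]
  exact l.getElem_mem this

lemma part_mono (l : List ℕ) (hs : l.Pairwise (· ≥ ·)) {j1 j2 : ℕ} (h1 : 1 ≤ j1)
    (h12 : j1 ≤ j2) : part l j2 ≤ part l j1 := by
  rcases le_or_gt j2 l.length with h2 | h2
  · rcases eq_or_lt_of_le h12 with rfl | hlt
    · exact le_refl _
    · have e1 : j1 - 1 < l.length := by omega
      have e2 : j2 - 1 < l.length := by omega
      have := List.pairwise_iff_get.mp hs ⟨j1-1, e1⟩ ⟨j2-1, e2⟩ (by simp; omega)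
      rw [part, part, l.getD_eq_getElem 0 e1, l.getD_eq_getElem 0 e2]
      simpa [List.get_eq_getElem] using this
  · rw [part, List.getD_eq_default]
    · exact Nat.zero_le _
    · omega

lemma M3_eq_layer (l : List ℕ) (K : ℕ) (hlen : l.length ≤ K)
    (hpart : ∀ j ∈ Finset.Icc 1 l.length, part l j ≤ K) :
    M3 l = 6 * ((∑ k ∈ Finset.Icc 1 K, (2 * k - 1) * cnt l k : ℕ) : ℤ) := by
  have step1 : M3 l = 6 * ∑ j ∈ Finset.Icc 1 l.length,
      ∑ m ∈ Finset.Icc 1 (part l j), ((m : ℤ) - j) ^ 2 := by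
    rw [M3, Finset.mul_sum]
    exact Finset.sum_congr rfl fun j _ => rowM3 (part l j) j
  rw [step1]
  congr 1
  have step2 : ∀ j ∈ Finset.Icc 1 l.length, ∀ m ∈ Finset.Icc 1 (part l j),
      (Nat.dist m j) ^ 2 = ∑ k ∈ Finset.Icc 1 K,
        (2 * k - 1) * (if j + k ≤ m ∨ m + k ≤ j then 1 else 0) := by
    intro j hj m hm
    have hpj := hpart j hj
    simp only [Finset.mem_Icc] at hj hm
    have hd : Nat.dist m j ≤ K := by
      simp only [Nat.dist]; omega
    rw [show (Nat.dist m j) ^ 2 = (min (Nat.dist m j) K) ^ 2 by rw [min_eq_left hd],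
        ← sum_layer]
    refine Finset.sum_congr rfl fun k _ => ?_
    congr 1
    exact if_congr (dist_cond k m j) rfl rfl
  have step3 : (∑ j ∈ Finset.Icc 1 l.length, ∑ m ∈ Finset.Icc 1 (part l j), (Nat.dist m j) ^ 2)
      = ∑ k ∈ Finset.Icc 1 K, (2 * k - 1) * cnt l k := by
    rw [Finset.sum_congr rfl (fun j hj => Finset.sum_congr rfl (fun m hm => step2 j hj m hm))]
    rw [Finset.sum_congr rfl (fun j _ => Finset.sum_comm)]
    rw [Finset.sum_comm]
    refine Finset.sum_congr rfl fun k _ => ?_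
    rw [cnt, Finset.mul_sum]
    exact Finset.sum_congr rfl fun j _ => (Finset.mul_sum _ _ _).symm
  rw [← step3]
  push_cast
  exact Finset.sum_congr rfl fun j _ => Finset.sum_congr rfl fun m _ => sq_eq_dist m j

lemma cnt_add_mcnt (l : List ℕ) (k : ℕ) : cnt l k + mcnt l k = l.sum := by
  rw [cnt, mcnt, ← Finset.sum_add_distrib, ← sum_parts l]
  refine Finset.sum_congr rfl fun j _ => ?_
  rw [← Finset.sum_add_distrib]
  have h : ∀ m ∈ Finset.Icc 1 (part l j),
      ((if j + k ≤ m ∨ m + k ≤ j then 1 else 0)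
        + if ¬ (j + k ≤ m ∨ m + k ≤ j) then 1 else 0) = 1 := by
    intro m _; split_ifs <;> simp
  rw [Finset.sum_congr rfl h, Finset.sum_const, Nat.card_Icc]
  simp

lemma mcnt_row (l : List ℕ) (k j : ℕ) (h1 : 1 ≤ j) (hk : j ≤ k) :
    (∑ m ∈ Finset.Icc 1 (part l j), if ¬ (j + k ≤ m ∨ m + k ≤ j) then 1 else 0)
      = min (part l j) (j + k - 1) := by
  rw [← sum_ind_le (part l j) (j + k - 1)]
  refine Finset.sum_congr rfl fun m hm => ?_
  simp only [Finset.mem_Icc] at hm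
  exact if_congr (by omega) rfl rfl

lemma mcnt_ge (l : List ℕ) (k J : ℕ) (hJc : J ≤ l.length) (hJk : J ≤ k) :
    ∑ j ∈ Finset.Icc 1 J, min (part l j) (j + k - 1) ≤ mcnt l k := by
  calc ∑ j ∈ Finset.Icc 1 J, min (part l j) (j + k - 1)
      = ∑ j ∈ Finset.Icc 1 J, ∑ m ∈ Finset.Icc 1 (part l j),
          (if ¬ (j + k ≤ m ∨ m + k ≤ j) then 1 else 0) := by
        refine Finset.sum_congr rfl fun j hj => ?_
        simp only [Finset.mem_Icc] at hj
        exact (mcnt_row l k j hj.1 (le_trans hj.2 hJk)).symm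
    _ ≤ mcnt l k :=
        Finset.sum_le_sum_of_subset (Finset.Icc_subset_Icc_right hJc)

lemma cnt_zero (l : List ℕ) (hs : l.Pairwise (· ≥ ·)) (k : ℕ) (hak : part l 1 < k)
    (hca : l.length ≤ part l 1) : cnt l k = 0 := by
  rw [cnt]
  refine Finset.sum_eq_zero fun j hj => Finset.sum_eq_zero fun m hm => ?_
  simp only [Finset.mem_Icc] at hj hm
  have hpj : part l j ≤ part l 1 := part_mono l hs le_rfl hj.1
  rw [if_neg]
  omega

lemma cnt_bound (n i : ℕ) (l : List ℕ) (hn : 3 ≤ n) (hi1 : 1 ≤ i) (hi2 : 2 * i ≤ n - 1)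
    (hs : l.Pairwise (· ≥ ·)) (hpos : ∀ x ∈ l, 0 < x) (hsum : l.sum = n)
    (hdet1 : i + 2 ≤ part l 2 + conjPart l 1) (hwide : conjPart l 1 ≤ part l 1)
    (k : ℕ) (hk : 1 ≤ k) :
    cnt l k ≤ (n - i - k) + (i + 1 - k) := by
  have hc1 : conjPart l 1 = l.length := by
    rw [conjPart]
    congr 1
    exact List.filter_eq_self.mpr fun x hx => by have := hpos x hx; simp; omega
  rw [hc1] at hdet1 hwide
  have hc2 : 2 ≤ l.length := by
    rcases l with _ | ⟨x, t⟩
    · simp at hsum; omega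
    · rcases t with _ | ⟨y, t2⟩
      · have hz : part [x] 2 = 0 := rfl
        have hl : ([x] : List ℕ).length = 1 := rfl
        rw [hz, hl] at hdet1
        omega
      · simp only [List.length_cons]
        omega
  have hparts_le : ∀ j, 1 ≤ j → j ≤ l.length → 1 ≤ part l j :=
    fun j a b => hpos _ (part_mem l a b)
  have hb1 : 1 ≤ part l 2 := hparts_le 2 (by omega) hc2
  have hF3 : part l 1 + part l 2 + (l.length - 2) ≤ n := by
    have e := sum_parts l
    rw [split3 (fun j => part l j) hc2] at e
    have h3 : l.length - 2 ≤ ∑ j ∈ Finset.Icc 3 l.length, part l j := by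
      calc l.length - 2 = ∑ j ∈ Finset.Icc 3 l.length, 1 := by
            rw [Finset.sum_const, smul_eq_mul, mul_one, Nat.card_Icc]; omega
        _ ≤ _ := Finset.sum_le_sum fun j hj => by
            simp only [Finset.mem_Icc] at hj
            exact hparts_le j (by omega) hj.2
    omega
  rcases lt_or_ge (part l 1) k with hak | hak
  · rw [cnt_zero l hs k hak hwide]
    exact Nat.zero_le _
  · have h1 : cnt l k + mcnt l k = n := by rw [cnt_add_mcnt, hsum]
    rcases eq_or_lt_of_le hk with hk1 | hk2
    · -- k = 1
      have hm : min (part l 1) (1 + k - 1) ≤ mcnt l k := by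
        have h := mcnt_ge l k 1 (by omega) (by omega)
        simpa using h
      omega
    · -- 2 ≤ k
      have hJ : 2 ≤ min l.length k := by omega
      have hmain := mcnt_ge l k (min l.length k) (by omega) (by omega)
      rw [split3 _ hJ] at hmain
      have hrest : min l.length k - 2
          ≤ ∑ j ∈ Finset.Icc 3 (min l.length k), min (part l j) (j + k - 1) := by
        calc min l.length k - 2 = ∑ j ∈ Finset.Icc 3 (min l.length k), 1 := by
              rw [Finset.sum_const, smul_eq_mul, mul_one, Nat.card_Icc]; omega
          _ ≤ _ := Finset.sum_le_sum fun j hj => by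
              simp only [Finset.mem_Icc] at hj
              have := hparts_le j (by omega) (by omega)
              omega
      have e1 : 1 + k - 1 = k := by omega
      have e2 : 2 + k - 1 = k + 1 := by omega
      rw [e1, e2] at hmain
      omega

lemma len_hook (n i : ℕ) : (hookPart n i).length = i + 1 := by simp [hookPart]

lemma part_hook_one (n i : ℕ) : part (hookPart n i) 1 = n - i := rfl

lemma part_hook (n i j : ℕ) (h2 : 2 ≤ j) (hj : j ≤ i + 1) : part (hookPart n i) j = 1 := by
  rw [part, hookPart]
  have e : j - 1 = (j - 2) + 1 := by omega
  rw [e, List.getD_cons_succ]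
  rw [(List.replicate i 1).getD_eq_getElem 0 (by simp; omega)]
  simp

lemma cnt_hook (n i k : ℕ) (hk : 1 ≤ k) :
    cnt (hookPart n i) k = (n - i - k) + (i + 1 - k) := by
  rw [cnt, len_hook, splitLow _ (by omega : 1 ≤ i + 1)]
  have h1 : (∑ m ∈ Finset.Icc 1 (part (hookPart n i) 1),
      if 1 + k ≤ m ∨ m + k ≤ 1 then 1 else 0) = n - i - k := by
    rw [part_hook_one, ← sum_ind_ge (n - i) k]
    refine Finset.sum_congr rfl fun m hm => ?_
    simp only [Finset.mem_Icc] at hm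
    exact if_congr (by omega) rfl rfl
  have h2 : (∑ j ∈ Finset.Icc 2 (i+1), ∑ m ∈ Finset.Icc 1 (part (hookPart n i) j),
      if j + k ≤ m ∨ m + k ≤ j then 1 else 0) = i + 1 - k := by
    have e : ∀ j ∈ Finset.Icc 2 (i+1), (∑ m ∈ Finset.Icc 1 (part (hookPart n i) j),
        if j + k ≤ m ∨ m + k ≤ j then 1 else 0) = (if k + 1 ≤ j then 1 else 0) := by
      intro j hj
      simp only [Finset.mem_Icc] at hj
      rw [part_hook n i j hj.1 hj.2, Finset.Icc_self, Finset.sum_singleton]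
      exact if_congr (by omega) rfl rfl
    rw [Finset.sum_congr rfl e]
    have e2 := sum_ind_ge (i+1) k
    rw [splitLow _ (by omega : 1 ≤ i + 1)] at e2
    have e3 : ¬ (k + 1 ≤ 1) := by omega
    rw [if_neg e3] at e2
    rw [show (1:ℕ)+1 = 2 from rfl] at e2
    omega
  rw [h1, h2]

/-- For `1 ≤ i ≤ (n−1)/2`, the hook `ρ^i = (n−i,1,…,1)` maximizes `M_3` among all
`i`-cycle detectors `λ` of `n` with `λ_1 ≥ λ′_1`. -/
theorem hook_maximizes_M3 (n i : ℕ) (hn : 3 ≤ n) (hi1 : 1 ≤ i) (hi2 : 2 * i ≤ n - 1)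
    (l : List ℕ) (hs : l.Pairwise (· ≥ ·)) (hpos : ∀ x ∈ l, 0 < x) (hsum : l.sum = n)
    (hdet : IsCycleDetector l i) (hwide : conjPart l 1 ≤ part l 1) :
    M3 l ≤ M3 (hookPart n i) := by
  obtain ⟨hdet1, -⟩ := hdet
  have hlen : l.length ≤ n := by
    have e := sum_parts l
    have h : l.length ≤ ∑ j ∈ Finset.Icc 1 l.length, part l j := by
      calc l.length = ∑ j ∈ Finset.Icc 1 l.length, 1 := by
            rw [Finset.sum_const, smul_eq_mul, mul_one, Nat.card_Icc]; omega
        _ ≤ _ := Finset.sum_le_sum fun j hj => by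
            simp only [Finset.mem_Icc] at hj
            exact hpos _ (part_mem l hj.1 hj.2)
    omega
  have hpartle : ∀ j ∈ Finset.Icc 1 l.length, part l j ≤ n := by
    intro j hj
    simp only [Finset.mem_Icc] at hj
    calc part l j ≤ l.sum :=
          List.single_le_sum (fun x _ => Nat.zero_le x) _ (part_mem l hj.1 hj.2)
      _ = n := hsum
  have hhlen : (hookPart n i).length ≤ n := by rw [len_hook]; omega
  have hhpartle : ∀ j ∈ Finset.Icc 1 (hookPart n i).length, part (hookPart n i) j ≤ n := by
    intro j hj
    rw [len_hook] at hj
    simp only [Finset.mem_Icc] at hj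
    rcases eq_or_lt_of_le hj.1 with rfl | hj2
    · rw [part_hook_one]; omega
    · rw [part_hook n i j (by omega) hj.2]; omega
  rw [M3_eq_layer l n hlen hpartle, M3_eq_layer (hookPart n i) n hhlen hhpartle]
  have hcomp : ∀ k ∈ Finset.Icc 1 n,
      (2 * k - 1) * cnt l k ≤ (2 * k - 1) * cnt (hookPart n i) k := by
    intro k hk
    simp only [Finset.mem_Icc] at hk
    refine Nat.mul_le_mul_left _ ?_
    rw [cnt_hook n i k hk.1]
    exact cnt_bound n i l hn hi1 hi2 hs hpos hsum hdet1 hwide k hk.1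
  exact mul_le_mul_of_nonneg_left (Int.ofNat_le.mpr (Finset.sum_le_sum hcomp)) (by norm_num)
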